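/- Let 𝓡 = 𝓡(ℝ,𝔽) with 𝔽 an algebraically closed field. Any n + 1 vectors in 𝓡̄ⁿ are linearly dependent. -/

import Mathlib

/-- The ELT algebra `𝓡(F, L)` together with an adjoined `−∞` element:
`bot` represents `−∞`, and `elt a ℓ` represents the element `[ℓ]a`
with tangible value `a ∈ F` and layer `ℓ ∈ L`.  Thus `ELT F L` plays the
role of `𝓡̄ = 𝓡 ∪ {−∞}`. -/
inductive ELT (F : Type) (L : Type) : Type
  | bot : ELT F L
  | elt : F → L → ELT F L

namespace ELT

variable {F : Type} {L : Type}

/-- The sorting map `s : 𝓡̄ → L`, with `s (−∞) = 0`. -/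
def s [Zero L] : ELT F L → L
  | bot => 0
  | elt _ ℓ => ℓ

/-- The tangible value `t : 𝓡̄ → F ∪ {−∞}`, with `t (−∞) = −∞ = ⊥`. -/
def t : ELT F L → WithBot F
  | bot => ⊥
  | elt a _ => (a : WithBot F)

/-- `−∞` is the additive identity of `𝓡̄`, so we register it as the zero. -/
instance : Zero (ELT F L) := ⟨bot⟩

/-- The multiplicative identity `[1]0`. -/
instance [Zero F] [One L] : One (ELT F L) := ⟨elt 0 1⟩

/-- Addition on `𝓡̄`: the element with larger tangible value wins, and layers
add in case of a tie; `−∞` is neutral. -/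
instance [LinearOrder F] [Add L] : Add (ELT F L) where
  add x y :=
    match x, y with
    | bot, y => y
    | x, bot => x
    | elt a ℓ, elt b k => if a < b then elt b k else if b < a then elt a ℓ else elt a (ℓ + k)

/-- Multiplication on `𝓡̄`: tangible values add, layers multiply; `−∞` is absorbing. -/
instance [Add F] [Mul L] : Mul (ELT F L) where
  mul x y :=
    match x, y with
    | bot, _ => bot
    | _, bot => bot
    | elt a ℓ, elt b k => elt (a + b) (ℓ * k)

/-- The surpassing relation `x ⊨ y` on `𝓡̄`: `x = y + z` for some zero-layered `z`. -/
def Surpass [LinearOrder F] [Add L] [Zero L] (x y : ELT F L) : Prop :=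
  ∃ z : ELT F L, s z = 0 ∧ x = y + z

/-- `x ∈ 𝓡^× ∪ {−∞}`: either `x = −∞` or `x` has nonzero layer. -/
def TangibleOrBot [Zero L] (x : ELT F L) : Prop :=
  x = bot ∨ s x ≠ 0

/-- The sum of a finite family of elements of `𝓡̄`. -/
def fsum [LinearOrder F] [Add L] {m : ℕ} (f : Fin m → ELT F L) : ELT F L :=
  (List.ofFn f).sum

/-- A finite family of vectors in `𝓡̄ⁿ` is linearly dependent if there are
coefficients in `𝓡^× ∪ {−∞}`, not all `−∞`, such that the corresponding linear
combination is zero-layered in every coordinate (equivalently, some subfamily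
admits a combination with all coefficients in `𝓡^×` which is zero-layered
everywhere). -/
def LinDep [LinearOrder F] [Zero L] [Add L] [Add F] [Mul L] {m n : ℕ}
    (v : Fin m → Fin n → ELT F L) : Prop :=
  ∃ a : Fin m → ELT F L, (∀ i, TangibleOrBot (a i)) ∧ (∃ i, a i ≠ bot) ∧
    ∀ j : Fin n, s (fsum fun i => a i * v i j) = 0

/-- The ELT determinant of a square ELT matrix. -/
noncomputable def det {n : ℕ} [LinearOrder F] [Add F] [Zero F] [Ring L]
    (A : Matrix (Fin n) (Fin n) (ELT F L)) : ELT F L :=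
  ((Finset.univ : Finset (Equiv.Perm (Fin n))).toList.map fun σ =>
    elt 0 (((Equiv.Perm.sign σ : ℤˣ) : ℤ) : L) * (List.ofFn fun i => A i (σ i)).prod).sum

/-- The EL tropicalization of a Hahn (generalized Puiseux) series: `0 ↦ −∞`,
and a nonzero series with leading monomial `ℓ tᵃ` goes to `[ℓ](−a)`. -/
noncomputable def ELTrop [AddCommGroup F] [LinearOrder F] [IsOrderedAddMonoid F] [Zero L] (x : HahnSeries F L) : ELT F L :=
  open scoped Classical in
  if x = 0 then bot else elt (-x.order) (x.coeff x.order)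

end ELT

namespace ELT

section Aux

variable {𝔽 : Type} [Field 𝔽]

lemma bot_add' (y : ELT ℝ 𝔽) : bot + y = y := by cases y <;> rfl

lemma add_bot' (x : ELT ℝ 𝔽) : x + bot = x := by cases x <;> rfl

lemma elt_add_elt' (a b : ℝ) (ℓ k : 𝔽) :
    elt a ℓ + elt b k =
      if a < b then elt b k else if b < a then elt a ℓ else elt a (ℓ + k) := rfl

lemma bot_mul' (y : ELT ℝ 𝔽) : (bot : ELT ℝ 𝔽) * y = bot := by cases y <;> rfl

lemma mul_bot' (x : ELT ℝ 𝔽) : x * bot = bot := by cases x <;> rfl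

lemma elt_mul_elt' (a b : ℝ) (ℓ k : 𝔽) : elt a ℓ * elt b k = elt (a + b) (ℓ * k) := rfl

/-- The coefficient of `x` at tangible value `g`. -/
noncomputable def vc : ELT ℝ 𝔽 → ℝ → 𝔽
  | bot, _ => 0
  | elt b ℓ, g => if b = g then ℓ else 0

lemma vc_zero (g : ℝ) : vc (0 : ELT ℝ 𝔽) g = 0 := rfl

lemma t_zero : t (0 : ELT ℝ 𝔽) = ⊥ := rfl

lemma t_add' (x y : ELT ℝ 𝔽) : t (x + y) = max (t x) (t y) := by
  cases x with
  | bot => rw [bot_add']; cases y <;> simp [t]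
  | elt a ℓ =>
    cases y with
    | bot => rw [add_bot']; simp [t]
    | elt b k =>
      rw [elt_add_elt']
      rcases lt_trichotomy a b with h | h | h
      · rw [if_pos h]
        simp only [t]
        rw [max_eq_right (by exact_mod_cast h.le)]
      · subst h
        rw [if_neg (lt_irrefl a), if_neg (lt_irrefl a)]
        simp [t]
      · rw [if_neg (not_lt.mpr h.le), if_pos h]
        simp only [t]
        rw [max_eq_left (by exact_mod_cast h.le)]

lemma t_le_t_sum : ∀ (l : List (ELT ℝ 𝔽)) (x : ELT ℝ 𝔽), x ∈ l → t x ≤ t l.sum := by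
  intro l
  induction l with
  | nil => simp
  | cons hd tl ih =>
    intro x hx
    rw [List.sum_cons, t_add']
    rcases List.mem_cons.mp hx with rfl | hx
    · exact le_max_left _ _
    · exact le_trans (ih x hx) (le_max_right _ _)

lemma t_sum_le {g : WithBot ℝ} :
    ∀ {l : List (ELT ℝ 𝔽)}, (∀ x ∈ l, t x ≤ g) → t l.sum ≤ g := by
  intro l
  induction l with
  | nil => intro _; simp [t_zero]
  | cons hd tl ih =>
    intro h
    rw [List.sum_cons, t_add', max_le_iff]
    exact ⟨h hd List.mem_cons_self, ih fun x hx => h x (List.mem_cons_of_mem _ hx)⟩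

lemma vc_add {x y : ELT ℝ 𝔽} {g : ℝ} (hx : t x ≤ (g : WithBot ℝ))
    (hy : t y ≤ (g : WithBot ℝ)) : vc (x + y) g = vc x g + vc y g := by
  cases x with
  | bot => rw [bot_add']; simp [vc]
  | elt a ℓ =>
    cases y with
    | bot => rw [add_bot']; simp [vc]
    | elt b k =>
      have ha : a ≤ g := by simpa [t] using hx
      have hb : b ≤ g := by simpa [t] using hy
      rw [elt_add_elt']
      rcases lt_trichotomy a b with h | h | h
      · rw [if_pos h]
        have hag : a ≠ g := fun h' => absurd hb (not_le.mpr (h' ▸ h))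
        simp only [vc, if_neg hag, zero_add]
      · subst h
        rw [if_neg (lt_irrefl a), if_neg (lt_irrefl a)]
        simp only [vc]
        split_ifs <;> simp
      · rw [if_neg (not_lt.mpr h.le), if_pos h]
        have hbg : b ≠ g := fun h' => absurd ha (not_le.mpr (h' ▸ h))
        simp only [vc, if_neg hbg, add_zero]

lemma vc_sum {g : ℝ} :
    ∀ {l : List (ELT ℝ 𝔽)}, (∀ x ∈ l, t x ≤ (g : WithBot ℝ)) →
      vc l.sum g = (l.map (vc · g)).sum := by
  intro l
  induction l with
  | nil => intro _; simp [vc_zero]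
  | cons hd tl ih =>
    intro h
    rw [List.sum_cons,
      vc_add (h hd List.mem_cons_self)
        (t_sum_le fun x hx => h x (List.mem_cons_of_mem _ hx)),
      List.map_cons, List.sum_cons, ih fun x hx => h x (List.mem_cons_of_mem _ hx)]

/-- Key lemma: if each `f i` has the same "coefficients" (at all tangible values
above its own) as the Hahn series `y i`, and the `y i` sum to zero, then the
ELT sum of the `f i` is zero-layered. -/
lemma s_fsum_eq_zero {m : ℕ} (f : Fin m → ELT ℝ 𝔽) (y : Fin m → HahnSeries ℝ 𝔽)
    (hP : ∀ i (g : ℝ), t (f i) ≤ (g : WithBot ℝ) → vc (f i) g = (y i).coeff (-g))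
    (hsum : ∑ i, y i = 0) : s (fsum f) = 0 := by
  cases hS : fsum f with
  | bot => rfl
  | elt g ℓ =>
    have hle : ∀ i, t (f i) ≤ (g : WithBot ℝ) := by
      intro i
      have h1 := t_le_t_sum (List.ofFn f) (f i)
        (List.mem_ofFn.mpr ⟨i, rfl⟩)
      rw [show (List.ofFn f).sum = fsum f from rfl, hS] at h1
      exact h1
    have h2 : vc (fsum f) g = (List.map (vc · g) (List.ofFn f)).sum := by
      apply vc_sum
      intro x hx
      rcases List.mem_ofFn.mp hx with ⟨i, rfl⟩
      exact hle i
    rw [hS] at h2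
    have h3 : vc (elt g ℓ) g = ℓ := by simp [vc]
    have h4 : (List.map (vc · g) (List.ofFn f)).sum = ∑ i, vc (f i) g := by
      rw [List.map_ofFn, List.sum_ofFn]; rfl
    have h5 : ∑ i, vc (f i) g = ∑ i, (y i).coeff (-g) :=
      Finset.sum_congr rfl fun i _ => hP i g (hle i)
    have h6 : ∑ i, (y i).coeff (-g) = (∑ i, y i).coeff (-g) :=
      (map_sum (HahnSeries.coeff.addMonoidHom (-g)) y Finset.univ).symm
    show ℓ = 0
    rw [← h3, h2, h4, h5, h6, hsum, HahnSeries.coeff_zero]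

/-- Lift of an ELT element to a Hahn series. -/
noncomputable def lift : ELT ℝ 𝔽 → HahnSeries ℝ 𝔽
  | bot => 0
  | elt b ℓ => HahnSeries.single (-b) ℓ

end Aux

end ELT

/-- Any `n + 1` vectors in `𝓡̄ⁿ` are linearly dependent. -/
theorem stmt12 {𝔽 : Type} [Field 𝔽] [IsAlgClosed 𝔽] {n : ℕ}
    (v : Fin (n + 1) → Fin n → ELT ℝ 𝔽) :
    ELT.LinDep v := by
  classical
  have hnli : ¬ LinearIndependent (HahnSeries ℝ 𝔽)
      (fun i j => ELT.lift (v i j) : Fin (n + 1) → Fin n → HahnSeries ℝ 𝔽) := by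
    intro h
    have hc := h.fintype_card_le_finrank
    rw [Module.finrank_fin_fun] at hc
    simp at hc
  obtain ⟨c, hc0, i0, hi0⟩ := Fintype.not_linearIndependent_iff.mp hnli
  refine ⟨fun i => ELT.ELTrop (c i), fun i => ?_, ⟨i0, ?_⟩, fun j => ?_⟩
  · by_cases h : c i = 0
    · left; simp [ELT.ELTrop, h]
    · right; simp [ELT.ELTrop, h, ELT.s]
  · simp [ELT.ELTrop, hi0]
  · apply ELT.s_fsum_eq_zero _ (fun i => c i * ELT.lift (v i j))
    · intro i g hg
      rcases hv : v i j with _ | ⟨b, ℓv⟩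
      · simp only [ELT.mul_bot'] at hg ⊢
        simp [ELT.vc, ELT.lift]
      · rw [hv] at hg
        by_cases hci : c i = 0
        · simp only [show ELT.ELTrop (c i) = ELT.bot by simp [ELT.ELTrop, hci],
            ELT.bot_mul'] at hg ⊢
          simp [ELT.vc, hci]
        · simp only [show ELT.ELTrop (c i) = ELT.elt (-(c i).order) ((c i).coeff (c i).order)
              by simp [ELT.ELTrop, hci], ELT.elt_mul_elt'] at hg ⊢
          have hgle : -(c i).order + b ≤ g := by
            simp only [ELT.t] at hg
            exact_mod_cast hg
          have hco : (c i * ELT.lift (ELT.elt b ℓv)).coeff (-g)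
              = (c i).coeff (-g + b) * ℓv := by
            have h1 := HahnSeries.coeff_mul_single_add (r := ℓv) (x := c i)
              (a := -g + b) (b := -b)
            rw [show -g + b + -b = -g by ring] at h1
            exact h1
          rw [hco]
          by_cases heq : -(c i).order + b = g
          · have : -g + b = (c i).order := by linarith
            simp [ELT.vc, heq, this]
          · have hlt : -(c i).order + b < g := lt_of_le_of_ne hgle heq
            have : -g + b < (c i).order := by linarith
            rw [HahnSeries.coeff_eq_zero_of_lt_order this, zero_mul]
            simp [ELT.vc, heq]
    · have h := congrFun hc0 j
      simpa [Finset.sum_apply, Pi.smul_apply, smul_eq_mul] using h
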